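/- Monotone decay of free energy along minimizers: if (ρ_t, j_t) satisfies ρ̇_t = −div j_t with j_t = J(ρ_t) (so Φ(ρ_t, j_t, F(ρ_t)) = 0), then d/dt F(ρ_t) = −Ψ*_S(ρ_t, F^S(ρ_t)) − Φ(ρ_t, J(ρ_t), F^A) ≤ 0, so the relative entropy F(ρ_t) is nonincreasing in t. -/

import Mathlib

open Finset

/-- Dual pairing `j·f = (1/2) ∑_{xy} j_{xy} f_{xy}`. -/
noncomputable def pairF {V : Type*} [Fintype V] (j f : V → V → ℝ) : ℝ :=
  (1 / 2) * ∑ x, ∑ y, j x y * f x y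

/-- `Ψ*` with mobility `a`. -/
noncomputable def PsiStar {V : Type*} [Fintype V] (a f : V → V → ℝ) : ℝ :=
  ∑ x, ∑ y, a x y * (Real.cosh (f x y / 2) - 1)

/-- `Ψ`, the Legendre dual of `Ψ*`. -/
noncomputable def PsiL {V : Type*} [Fintype V] (a j : V → V → ℝ) : ℝ :=
  ⨆ g : V → V → ℝ, (pairF j g - PsiStar a g)

/-- The Onsager–Machlup functional `Φ(ρ,j,f) = Ψ(ρ,j) - j·f + Ψ*(ρ,f)`. -/
noncomputable def PhiOM {V : Type*} [Fintype V] (a j f : V → V → ℝ) : ℝ :=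
  PsiL a j - pairF j f + PsiStar a f

/-- Mobility `a_{xy}(ρ) = 2√(ρ(x) r_{xy} ρ(y) r_{yx})`. -/
noncomputable def aMob {V : Type*} (r : V → V → ℝ) (ρ : V → ℝ) (x y : V) : ℝ :=
  2 * Real.sqrt (ρ x * r x y * (ρ y * r y x))

/-- Probability current `J_{xy}(ρ) = ρ(x) r_{xy} - ρ(y) r_{yx}`. -/
def Jcur {V : Type*} (r : V → V → ℝ) (ρ : V → ℝ) (x y : V) : ℝ :=
  ρ x * r x y - ρ y * r y x

/-! ### Auxiliary lemmas -/

lemma cosh_tangent' (a b : ℝ) : Real.cosh a + Real.sinh a * (b - a) ≤ Real.cosh b := by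
  rw [Real.cosh_eq, Real.sinh_eq, Real.cosh_eq]
  have h1 := Real.add_one_le_exp (b - a)
  have h2 := Real.add_one_le_exp (a - b)
  have e1 : Real.exp a * Real.exp (b-a) = Real.exp b := by rw [← Real.exp_add]; ring_nf
  have e2 : Real.exp (-a) * Real.exp (a-b) = Real.exp (-b) := by rw [← Real.exp_add]; ring_nf
  nlinarith [Real.exp_pos a, Real.exp_pos (-a)]

lemma pair_sub_psiStar_eq {V : Type*} [Fintype V] (a j g : V → V → ℝ) :
    pairF j g - PsiStar a g
      = ∑ x, ∑ y, ((1/2) * (j x y * g x y) - a x y * (Real.cosh (g x y / 2) - 1)) := by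
  simp only [pairF, PsiStar, Finset.mul_sum, ← Finset.sum_sub_distrib]

lemma pointwise_bound {V : Type*} [Fintype V] (a j f : V → V → ℝ)
    (ha : ∀ x y, 0 ≤ a x y) (hj : ∀ x y, j x y = a x y * Real.sinh (f x y / 2))
    (g : V → V → ℝ) :
    pairF j g - PsiStar a g ≤ pairF j f - PsiStar a f := by
  rw [pair_sub_psiStar_eq, pair_sub_psiStar_eq]
  refine Finset.sum_le_sum fun x _ => Finset.sum_le_sum fun y _ => ?_
  have ht := cosh_tangent' (f x y / 2) (g x y / 2)
  have := ha x y
  rw [hj x y]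
  nlinarith

lemma psiL_eq {V : Type*} [Fintype V] (a j f : V → V → ℝ)
    (ha : ∀ x y, 0 ≤ a x y) (hj : ∀ x y, j x y = a x y * Real.sinh (f x y / 2)) :
    PsiL a j = pairF j f - PsiStar a f := by
  unfold PsiL
  apply le_antisymm
  · exact ciSup_le (pointwise_bound a j f ha hj)
  · exact le_ciSup ⟨pairF j f - PsiStar a f, by
      rintro _ ⟨g, rfl⟩; exact pointwise_bound a j f ha hj g⟩ f

lemma pairF_add {V : Type*} [Fintype V] (j f g : V → V → ℝ) :
    pairF j (fun x y => f x y + g x y) = pairF j f + pairF j g := by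
  simp only [pairF, mul_add, Finset.sum_add_distrib]

lemma exp_half_log {x : ℝ} (hx : 0 < x) : Real.exp (Real.log x / 2) = Real.sqrt x := by
  rw [← Real.log_sqrt hx.le, Real.exp_log (Real.sqrt_pos.2 hx)]

lemma sinh_half_log_div {p q : ℝ} (hp : 0 < p) (hq : 0 < q) :
    Real.sinh (Real.log (p / q) / 2)
      = (Real.sqrt p / Real.sqrt q - Real.sqrt q / Real.sqrt p) / 2 := by
  have h : Real.log (p / q) / 2 = Real.log p / 2 - Real.log q / 2 := by
    rw [Real.log_div hp.ne' hq.ne']; ring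
  rw [Real.sinh_eq, h, Real.exp_sub, exp_half_log hp, exp_half_log hq, neg_sub, Real.exp_sub,
    exp_half_log hp, exp_half_log hq]

lemma jcur_eq_pos {ρx ρy πx πy rxy ryx : ℝ} (h1 : 0 < ρx) (h2 : 0 < ρy) (h3 : 0 < πx)
    (h4 : 0 < πy) (h5 : 0 < rxy) (h6 : 0 < ryx) :
    2 * Real.sqrt (ρx * rxy * (ρy * ryx)) *
      Real.sinh ((Real.log (ρx * πy / (ρy * πx)) + Real.log (πx * rxy / (πy * ryx))) / 2)
      = ρx * rxy - ρy * ryx := by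
  have hFt : Real.log (ρx * πy / (ρy * πx)) + Real.log (πx * rxy / (πy * ryx))
      = Real.log ((ρx * rxy) / (ρy * ryx)) := by
    rw [← Real.log_mul (by positivity) (by positivity)]
    congr 1; field_simp
  rw [hFt, sinh_half_log_div (by positivity) (by positivity),
    Real.sqrt_mul (by positivity)]
  have s1 := Real.sq_sqrt (show (0:ℝ) ≤ ρx * rxy by positivity)
  have s2 := Real.sq_sqrt (show (0:ℝ) ≤ ρy * ryx by positivity)
  have p1 := Real.sqrt_pos.2 (show (0:ℝ) < ρx * rxy by positivity)
  have p2 := Real.sqrt_pos.2 (show (0:ℝ) < ρy * ryx by positivity)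
  set u := Real.sqrt (ρx * rxy)
  set v := Real.sqrt (ρy * ryx)
  field_simp
  linear_combination s1 - s2

lemma sinh_sinh_eq {ρx ρy πx πy rxy ryx : ℝ} (h1 : 0 < ρx) (h2 : 0 < ρy) (h3 : 0 < πx)
    (h4 : 0 < πy) (h5 : 0 < rxy) (h6 : 0 < ryx) :
    2 * (2 * Real.sqrt (ρx * rxy * (ρy * ryx))) *
      Real.sinh (Real.log (ρx * πy / (ρy * πx)) / 2) *
      Real.sinh (Real.log (πx * rxy / (πy * ryx)) / 2)
      = ρx * rxy + ρy * ryx - (πy/πx) * ρx * ryx - (πx/πy) * ρy * rxy := by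
  rw [sinh_half_log_div (by positivity) (by positivity),
      sinh_half_log_div (by positivity) (by positivity)]
  obtain ⟨A1, hA1, rfl⟩ : ∃ a, 0 < a ∧ ρx = a^2 :=
    ⟨Real.sqrt ρx, Real.sqrt_pos.2 h1, (Real.sq_sqrt h1.le).symm⟩
  obtain ⟨A2, hA2, rfl⟩ : ∃ a, 0 < a ∧ ρy = a^2 :=
    ⟨Real.sqrt ρy, Real.sqrt_pos.2 h2, (Real.sq_sqrt h2.le).symm⟩
  obtain ⟨B1, hB1, rfl⟩ : ∃ a, 0 < a ∧ πx = a^2 :=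
    ⟨Real.sqrt πx, Real.sqrt_pos.2 h3, (Real.sq_sqrt h3.le).symm⟩
  obtain ⟨B2, hB2, rfl⟩ : ∃ a, 0 < a ∧ πy = a^2 :=
    ⟨Real.sqrt πy, Real.sqrt_pos.2 h4, (Real.sq_sqrt h4.le).symm⟩
  obtain ⟨C1, hC1, rfl⟩ : ∃ a, 0 < a ∧ rxy = a^2 :=
    ⟨Real.sqrt rxy, Real.sqrt_pos.2 h5, (Real.sq_sqrt h5.le).symm⟩
  obtain ⟨C2, hC2, rfl⟩ : ∃ a, 0 < a ∧ ryx = a^2 :=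
    ⟨Real.sqrt ryx, Real.sqrt_pos.2 h6, (Real.sq_sqrt h6.le).symm⟩
  rw [show A1^2 * C1^2 * (A2^2 * C2^2) = (A1*C1*(A2*C2))^2 by ring,
      show A1^2 * B2^2 = (A1*B2)^2 by ring, show A2^2 * B1^2 = (A2*B1)^2 by ring,
      show B1^2 * C1^2 = (B1*C1)^2 by ring, show B2^2 * C2^2 = (B2*C2)^2 by ring,
      Real.sqrt_sq (by positivity), Real.sqrt_sq (by positivity), Real.sqrt_sq (by positivity),
      Real.sqrt_sq (by positivity), Real.sqrt_sq (by positivity)]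
  field_simp
  ring

section Key

variable {V : Type*} [Fintype V] (r : V → V → ℝ) (π : V → ℝ) (ρ : V → ℝ)

lemma aMob_nonneg : ∀ x y, 0 ≤ aMob r ρ x y := fun x y => by
  unfold aMob; positivity

lemma rzero {x y : V} (hr : ∀ x y, 0 ≤ r x y) (hsym : ∀ x y, 0 < r x y ↔ 0 < r y x)
    (h : ¬ 0 < r x y) : r x y = 0 ∧ r y x = 0 := by
  have h1 : r x y = 0 := le_antisymm (not_lt.1 h) (hr x y)
  have h2 : r y x = 0 := le_antisymm (not_lt.1 fun hp => h ((hsym x y).2 hp)) (hr y x)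
  exact ⟨h1, h2⟩

lemma jcur_sinh (hr : ∀ x y, 0 ≤ r x y) (hsym : ∀ x y, 0 < r x y ↔ 0 < r y x)
    (hπpos : ∀ x, 0 < π x) (hρpos : ∀ x, 0 < ρ x) (x y : V) :
    Jcur r ρ x y = aMob r ρ x y *
      Real.sinh ((Real.log (ρ x * π y / (ρ y * π x))
        + Real.log ((π x * r x y) / (π y * r y x))) / 2) := by
  by_cases h : 0 < r x y
  · exact (jcur_eq_pos (hρpos x) (hρpos y) (hπpos x) (hπpos y) h ((hsym x y).1 h)).symm
  · obtain ⟨h1, h2⟩ := rzero r hr hsym h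
    simp [Jcur, aMob, h1, h2]

lemma sinh_sinh_term (hr : ∀ x y, 0 ≤ r x y) (hsym : ∀ x y, 0 < r x y ↔ 0 < r y x)
    (hπpos : ∀ x, 0 < π x) (hρpos : ∀ x, 0 < ρ x) (x y : V) :
    aMob r ρ x y * Real.sinh (Real.log (ρ x * π y / (ρ y * π x)) / 2) *
      Real.sinh (Real.log ((π x * r x y) / (π y * r y x)) / 2)
      = (ρ x * r x y + ρ y * r y x - (π y / π x) * ρ x * r y x
          - (π x / π y) * ρ y * r x y) / 2 := by
  by_cases h : 0 < r x y
  · have := sinh_sinh_eq (hρpos x) (hρpos y) (hπpos x) (hπpos y) h ((hsym x y).1 h)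
    unfold aMob
    linarith
  · obtain ⟨h1, h2⟩ := rzero r hr hsym h
    simp [aMob, h1, h2]

lemma sum_sinh_sinh_zero (hr : ∀ x y, 0 ≤ r x y) (hsym : ∀ x y, 0 < r x y ↔ 0 < r y x)
    (hπpos : ∀ x, 0 < π x) (hinv : ∀ x, ∑ y, π x * r x y = ∑ y, π y * r y x)
    (hρpos : ∀ x, 0 < ρ x) :
    ∑ x, ∑ y, aMob r ρ x y * Real.sinh (Real.log (ρ x * π y / (ρ y * π x)) / 2) *
      Real.sinh (Real.log ((π x * r x y) / (π y * r y x)) / 2) = 0 := by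
  simp_rw [sinh_sinh_term r π ρ hr hsym hπpos hρpos]
  have e1 : (∑ x, ∑ y, ρ y * r y x) = ∑ x, ∑ y, ρ x * r x y := Finset.sum_comm
  have e2 : (∑ x, ∑ y, (π x / π y) * ρ y * r x y) = ∑ x, ∑ y, (π y / π x) * ρ x * r y x :=
    Finset.sum_comm
  have e3 : (∑ x, ∑ y, (π y / π x) * ρ x * r y x) = ∑ x, ∑ y, ρ x * r x y := by
    refine Finset.sum_congr rfl fun x _ => ?_
    have h1 : (∑ y, (π y / π x) * ρ x * r y x) = (ρ x / π x) * ∑ y, π y * r y x := by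
      rw [Finset.mul_sum]
      refine Finset.sum_congr rfl fun y _ => ?_
      field_simp
    rw [h1, ← hinv x, Finset.mul_sum]
    refine Finset.sum_congr rfl fun y _ => ?_
    have hπ := (hπpos x).ne'
    field_simp
  simp only [Finset.sum_sub_distrib, Finset.sum_add_distrib, ← Finset.sum_div]
  linarith [e1, e2, e3]


lemma key_identity (hr : ∀ x y, 0 ≤ r x y) (hsym : ∀ x y, 0 < r x y ↔ 0 < r y x)
    (hπpos : ∀ x, 0 < π x) (hinv : ∀ x, ∑ y, π x * r x y = ∑ y, π y * r y x)
    (hρpos : ∀ x, 0 < ρ x) :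
    pairF (Jcur r ρ) (fun x y => Real.log (ρ x * π y / (ρ y * π x)))
      = PsiStar
          (fun x y => aMob r ρ x y * Real.cosh (Real.log ((π x * r x y) / (π y * r y x)) / 2))
          (fun x y => Real.log (ρ x * π y / (ρ y * π x)))
        + PhiOM (aMob r ρ) (Jcur r ρ)
            (fun x y => Real.log ((π x * r x y) / (π y * r y x))) := by
  have hJ : ∀ x y, Jcur r ρ x y = aMob r ρ x y *
      Real.sinh (((fun x y => Real.log (ρ x * π y / (ρ y * π x)) +
        Real.log ((π x * r x y) / (π y * r y x))) x y) / 2) :=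
    jcur_sinh r π ρ hr hsym hπpos hρpos
  have hPsiL := psiL_eq (aMob r ρ) (Jcur r ρ) _ (aMob_nonneg r ρ) hJ
  have hpadd := pairF_add (Jcur r ρ) (fun x y => Real.log (ρ x * π y / (ρ y * π x)))
    (fun x y => Real.log ((π x * r x y) / (π y * r y x)))
  have hsplit : PsiStar (aMob r ρ)
        (fun x y => Real.log (ρ x * π y / (ρ y * π x)) +
          Real.log ((π x * r x y) / (π y * r y x)))
      - PsiStar
          (fun x y => aMob r ρ x y * Real.cosh (Real.log ((π x * r x y) / (π y * r y x)) / 2))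
          (fun x y => Real.log (ρ x * π y / (ρ y * π x)))
      - PsiStar (aMob r ρ) (fun x y => Real.log ((π x * r x y) / (π y * r y x)))
      = ∑ x, ∑ y, aMob r ρ x y * Real.sinh (Real.log (ρ x * π y / (ρ y * π x)) / 2) *
          Real.sinh (Real.log ((π x * r x y) / (π y * r y x)) / 2) := by
    unfold PsiStar
    simp only [← Finset.sum_sub_distrib]
    refine Finset.sum_congr rfl fun x _ => Finset.sum_congr rfl fun y _ => ?_
    have h2 : (Real.log (ρ x * π y / (ρ y * π x)) + Real.log ((π x * r x y) / (π y * r y x))) / 2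
        = Real.log (ρ x * π y / (ρ y * π x)) / 2 +
          Real.log ((π x * r x y) / (π y * r y x)) / 2 := by ring
    rw [h2, Real.cosh_add]
    ring
  have hS := sum_sinh_sinh_zero r π ρ hr hsym hπpos hinv hρpos
  unfold PhiOM
  rw [hPsiL, hpadd]
  linarith [hsplit, hS]

lemma psiStarS_nonneg :
    0 ≤ PsiStar
        (fun x y => aMob r ρ x y * Real.cosh (Real.log ((π x * r x y) / (π y * r y x)) / 2))
        (fun x y => Real.log (ρ x * π y / (ρ y * π x))) := by
  refine Finset.sum_nonneg fun x _ => Finset.sum_nonneg fun y _ => ?_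
  have h1 := aMob_nonneg r ρ x y
  have h2 := (Real.cosh_pos (x := Real.log ((π x * r x y) / (π y * r y x)) / 2)).le
  have h3 := Real.one_le_cosh (Real.log (ρ x * π y / (ρ y * π x)) / 2)
  have : (0:ℝ) ≤ Real.cosh (Real.log (ρ x * π y / (ρ y * π x)) / 2) - 1 := by linarith
  positivity

lemma phiOM_nonneg (hr : ∀ x y, 0 ≤ r x y) (hsym : ∀ x y, 0 < r x y ↔ 0 < r y x)
    (hπpos : ∀ x, 0 < π x) (hρpos : ∀ x, 0 < ρ x) :
    0 ≤ PhiOM (aMob r ρ) (Jcur r ρ)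
        (fun x y => Real.log ((π x * r x y) / (π y * r y x))) := by
  have hJ : ∀ x y, Jcur r ρ x y = aMob r ρ x y *
      Real.sinh (((fun x y => Real.log (ρ x * π y / (ρ y * π x)) +
        Real.log ((π x * r x y) / (π y * r y x))) x y) / 2) :=
    jcur_sinh r π ρ hr hsym hπpos hρpos
  have hPsiL := psiL_eq (aMob r ρ) (Jcur r ρ) _ (aMob_nonneg r ρ) hJ
  have hb := pointwise_bound (aMob r ρ) (Jcur r ρ) _ (aMob_nonneg r ρ) hJ
    (fun x y => Real.log ((π x * r x y) / (π y * r y x)))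
  unfold PhiOM
  rw [hPsiL]
  linarith [hb]

end Key

/-- Monotone decay of free energy along minimisers: if `ρ̇_t = -div J(ρ_t)`
(solution of the master equation), then
`d/dt 𝓕(ρ_t) = -Ψ*_S(ρ_t, F^S(ρ_t)) - Φ(ρ_t, J(ρ_t), F^A) ≤ 0`, and hence the
relative entropy `𝓕(ρ_t)` is nonincreasing in `t`. -/
theorem free_energy_monotone_decay {V : Type*} [Fintype V]
    (r : V → V → ℝ) (π : V → ℝ)
    (hr : ∀ x y, 0 ≤ r x y) (hsym : ∀ x y, 0 < r x y ↔ 0 < r y x)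
    (hπpos : ∀ x, 0 < π x)
    (hinv : ∀ x, ∑ y, π x * r x y = ∑ y, π y * r y x)
    (ρ : ℝ → V → ℝ)
    (hρpos : ∀ t x, 0 < ρ t x) (hρsum : ∀ t, ∑ x, ρ t x = 1)
    (hmaster : ∀ t x, HasDerivAt (fun s => ρ s x) (-∑ y, Jcur r (ρ t) x y) t) :
    (∀ t, HasDerivAt (fun s => ∑ x, ρ s x * Real.log (ρ s x / π x))
        (-(PsiStar
              (fun x y => aMob r (ρ t) x y *
                Real.cosh (Real.log ((π x * r x y) / (π y * r y x)) / 2))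
              (fun x y => Real.log (ρ t x * π y / (ρ t y * π x))))
          - PhiOM (aMob r (ρ t)) (Jcur r (ρ t))
              (fun x y => Real.log ((π x * r x y) / (π y * r y x)))) t)
      ∧ (∀ t,
          (-(PsiStar
                (fun x y => aMob r (ρ t) x y *
                  Real.cosh (Real.log ((π x * r x y) / (π y * r y x)) / 2))
                (fun x y => Real.log (ρ t x * π y / (ρ t y * π x))))
            - PhiOM (aMob r (ρ t)) (Jcur r (ρ t))
                (fun x y => Real.log ((π x * r x y) / (π y * r y x)))) ≤ 0)
      ∧ Antitone fun t => ∑ x, ρ t x * Real.log (ρ t x / π x) := by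
  have hle : ∀ t,
      (-(PsiStar
            (fun x y => aMob r (ρ t) x y *
              Real.cosh (Real.log ((π x * r x y) / (π y * r y x)) / 2))
            (fun x y => Real.log (ρ t x * π y / (ρ t y * π x))))
        - PhiOM (aMob r (ρ t)) (Jcur r (ρ t))
            (fun x y => Real.log ((π x * r x y) / (π y * r y x)))) ≤ 0 := by
    intro t
    have h1 := psiStarS_nonneg r π (ρ t)
    have h2 := phiOM_nonneg r π (ρ t) hr hsym hπpos (hρpos t)
    linarith
  have hder : ∀ t, HasDerivAt (fun s => ∑ x, ρ s x * Real.log (ρ s x / π x))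
      (-(PsiStar
            (fun x y => aMob r (ρ t) x y *
              Real.cosh (Real.log ((π x * r x y) / (π y * r y x)) / 2))
            (fun x y => Real.log (ρ t x * π y / (ρ t y * π x))))
        - PhiOM (aMob r (ρ t)) (Jcur r (ρ t))
            (fun x y => Real.log ((π x * r x y) / (π y * r y x)))) t := by
    intro t
    -- the raw derivative
    have hraw : HasDerivAt (fun s => ∑ x, ρ s x * Real.log (ρ s x / π x))
        (∑ x, (-∑ y, Jcur r (ρ t) x y) * (Real.log (ρ t x / π x) + 1)) t := by
      refine HasDerivAt.fun_sum fun x _ => ?_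
      have h := hmaster t x
      have hne : ρ t x / π x ≠ 0 := by
        have := hρpos t x; have := hπpos x; positivity
      have hlog := (h.div_const (π x)).log hne
      have hmul := h.fun_mul hlog
      convert hmul using 1
      · rfl
      have hπ := (hπpos x).ne'
      have hρ := (hρpos t x).ne'
      field_simp
      ring
    -- the antisymmetric current sums to zero
    have hanti : ∀ x y, Jcur r (ρ t) x y = -(Jcur r (ρ t) y x) := by
      intro x y; unfold Jcur; ring
    have h0 : (∑ x, ∑ y, Jcur r (ρ t) x y) = 0 := by
      have : (∑ x, ∑ y, Jcur r (ρ t) x y) = -∑ x, ∑ y, Jcur r (ρ t) x y := by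
        calc (∑ x, ∑ y, Jcur r (ρ t) x y)
            = ∑ x, ∑ y, Jcur r (ρ t) y x := Finset.sum_comm
          _ = ∑ x, ∑ y, -(Jcur r (ρ t) x y) := by
              refine Finset.sum_congr rfl fun x _ => Finset.sum_congr rfl fun y _ => ?_
              rw [← hanti]
          _ = -∑ x, ∑ y, Jcur r (ρ t) x y := by
              simp [Finset.sum_neg_distrib]
      linarith
    -- pairF against F^S equals the single-log sum
    have hFS : ∀ x y, Real.log (ρ t x * π y / (ρ t y * π x))
        = Real.log (ρ t x / π x) - Real.log (ρ t y / π y) := by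
      intro x y
      rw [Real.log_div (mul_ne_zero (hρpos t x).ne' (hπpos y).ne')
            (mul_ne_zero (hρpos t y).ne' (hπpos x).ne'),
          Real.log_mul (hρpos t x).ne' (hπpos y).ne',
          Real.log_mul (hρpos t y).ne' (hπpos x).ne',
          Real.log_div (hρpos t x).ne' (hπpos x).ne',
          Real.log_div (hρpos t y).ne' (hπpos y).ne']
      ring
    have hswap : (∑ x, ∑ y, Jcur r (ρ t) x y * Real.log (ρ t y / π y))
        = -∑ x, ∑ y, Jcur r (ρ t) x y * Real.log (ρ t x / π x) := by
      calc (∑ x, ∑ y, Jcur r (ρ t) x y * Real.log (ρ t y / π y))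
          = ∑ x, ∑ y, Jcur r (ρ t) y x * Real.log (ρ t x / π x) := Finset.sum_comm
        _ = ∑ x, ∑ y, -(Jcur r (ρ t) x y * Real.log (ρ t x / π x)) := by
            refine Finset.sum_congr rfl fun x _ => Finset.sum_congr rfl fun y _ => ?_
            rw [hanti x y]; ring
        _ = -∑ x, ∑ y, Jcur r (ρ t) x y * Real.log (ρ t x / π x) := by
            simp [Finset.sum_neg_distrib]
    have hpair : pairF (Jcur r (ρ t)) (fun x y => Real.log (ρ t x * π y / (ρ t y * π x)))
        = ∑ x, ∑ y, Jcur r (ρ t) x y * Real.log (ρ t x / π x) := by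
      unfold pairF
      have : (∑ x, ∑ y, Jcur r (ρ t) x y * Real.log (ρ t x * π y / (ρ t y * π x)))
          = ∑ x, ∑ y, (Jcur r (ρ t) x y * Real.log (ρ t x / π x)
              - Jcur r (ρ t) x y * Real.log (ρ t y / π y)) := by
        refine Finset.sum_congr rfl fun x _ => Finset.sum_congr rfl fun y _ => ?_
        rw [hFS x y]; ring
      rw [this]
      simp only [Finset.sum_sub_distrib]
      rw [hswap]
      ring
    -- the value of the raw derivative
    have hval : (∑ x, (-∑ y, Jcur r (ρ t) x y) * (Real.log (ρ t x / π x) + 1))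
        = -(pairF (Jcur r (ρ t)) (fun x y => Real.log (ρ t x * π y / (ρ t y * π x)))) := by
      have hterm : ∀ x, (-∑ y, Jcur r (ρ t) x y) * (Real.log (ρ t x / π x) + 1)
          = -(∑ y, Jcur r (ρ t) x y * Real.log (ρ t x / π x)) - ∑ y, Jcur r (ρ t) x y := by
        intro x
        rw [← Finset.sum_mul]
        ring
      simp only [hterm, Finset.sum_sub_distrib]
      rw [hpair, h0]
      simp [Finset.sum_neg_distrib]
    have hkey := key_identity r π (ρ t) hr hsym hπpos hinv (hρpos t)
    have : (∑ x, (-∑ y, Jcur r (ρ t) x y) * (Real.log (ρ t x / π x) + 1))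
        = (-(PsiStar
              (fun x y => aMob r (ρ t) x y *
                Real.cosh (Real.log ((π x * r x y) / (π y * r y x)) / 2))
              (fun x y => Real.log (ρ t x * π y / (ρ t y * π x))))
          - PhiOM (aMob r (ρ t)) (Jcur r (ρ t))
              (fun x y => Real.log ((π x * r x y) / (π y * r y x)))) := by
      rw [hval, hkey]; ring
    exact this ▸ hraw
  refine ⟨hder, hle, ?_⟩
  exact antitone_of_hasDerivAt_nonpos hder hle
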